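/- Let U ∈ ℝ^{(k+p)×k} have full column rank k, let Π_{I_*}^T Q_C have full column rank where C = Q_C R_C is a thin QR factorization with U = Π_{I_*}^T C, and let ε > 0. Then for any perturbations ΔC, ΔU: (C + ΔC)(U + ΔU)_ε^† U = C + E_*, where ‖E_*‖₂ ≤ ‖(Π_{I_*}^T Q_C)^†‖₂ (ε + 2‖ΔU‖₂ + ‖ΔU‖₂²/ε) + ‖ΔC‖₂ (1 + ‖ΔU‖₂/ε). -/

import Mathlib

open Matrix
open scoped Matrix.Norms.L2Operator

noncomputable section

/-- `B` is the Moore–Penrose pseudoinverse of `A` (the four Penrose conditions). -/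
def IsMP {m n : ℕ} (A : Matrix (Fin m) (Fin n) ℝ) (B : Matrix (Fin n) (Fin m) ℝ) : Prop :=
  A * B * A = A ∧ B * A * B = B ∧ (A * B)ᵀ = A * B ∧ (B * A)ᵀ = B * A

/-- Euclidean norm of a vector. -/
def eucNorm {a : ℕ} (v : Fin a → ℝ) : ℝ := Real.sqrt (∑ i, (v i) ^ 2)

/-- Spectral (ℓ2 operator) norm of a matrix. -/
def spec {a b : ℕ} (M : Matrix (Fin a) (Fin b) ℝ) : ℝ :=
  sSup {r | ∃ x : Fin b → ℝ, eucNorm x = 1 ∧ r = eucNorm (M.mulVec x)}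

/-- Selection matrix whose columns are the columns of the identity indexed by `g`. -/
def sel {a b : ℕ} (g : Fin a → Fin b) : Matrix (Fin b) (Fin a) ℝ :=
  fun i j => if g j = i then 1 else 0


lemma enormE {a : ℕ} (v : EuclideanSpace ℝ (Fin a)) :
    eucNorm ((WithLp.equiv 2 (Fin a → ℝ)) v) = ‖v‖ := by
  rw [EuclideanSpace.norm_eq, eucNorm]
  congr 1
  refine Finset.sum_congr rfl fun i _ => ?_
  rw [Real.norm_eq_abs, sq_abs]
  rfl

lemma enorm_nonneg {a : ℕ} (v : Fin a → ℝ) : 0 ≤ eucNorm v := Real.sqrt_nonneg _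

lemma norm_le_of_mulVec {a b : ℕ} (M : Matrix (Fin a) (Fin b) ℝ) {c : ℝ} (hc : 0 ≤ c)
    (h : ∀ x : Fin b → ℝ, eucNorm (M *ᵥ x) ≤ c * eucNorm x) : ‖M‖ ≤ c := by
  rw [Matrix.l2_opNorm_def]
  refine ContinuousLinearMap.opNorm_le_bound _ hc fun x => ?_
  have hx : (((Matrix.toEuclideanLin (𝕜 := ℝ) (m := Fin a) (n := Fin b)).trans
      LinearMap.toContinuousLinearMap) M) x
      = (WithLp.equiv 2 (Fin a → ℝ)).symm (M *ᵥ ((WithLp.equiv 2 (Fin b → ℝ)) x)) := rfl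
  rw [hx, ← enormE, ← enormE x]
  simp only [Equiv.apply_symm_apply]
  exact h _

lemma enorm_def' {a : ℕ} (v : Fin a → ℝ) :
    eucNorm v = ‖(WithLp.equiv 2 (Fin a → ℝ)).symm v‖ := by
  have := enormE ((WithLp.equiv 2 (Fin a → ℝ)).symm v)
  simpa using this

lemma eucNorm_smul {a : ℕ} (c : ℝ) (v : Fin a → ℝ) : eucNorm (c • v) = |c| * eucNorm v := by
  rw [eucNorm, eucNorm]
  have h : ∀ i, ((c • v) i)^2 = c^2 * (v i)^2 := by intro i; simp [mul_pow]
  rw [Finset.sum_congr rfl fun i _ => h i, ← Finset.mul_sum,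
    Real.sqrt_mul (sq_nonneg c), Real.sqrt_sq_eq_abs]

lemma mulVec_enorm_le {a b : ℕ} (M : Matrix (Fin a) (Fin b) ℝ) (x : Fin b → ℝ) :
    eucNorm (M *ᵥ x) ≤ ‖M‖ * eucNorm x := by
  rw [enorm_def', enorm_def']
  exact Matrix.l2_opNorm_mulVec M ((WithLp.equiv 2 (Fin b → ℝ)).symm x)

lemma spec_eq_norm {a b : ℕ} (M : Matrix (Fin a) (Fin b) ℝ) : spec M = ‖M‖ := by
  rcases Nat.eq_zero_or_pos b with hb | hb
  · subst hb
    have hM : M = 0 := Subsingleton.elim _ _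
    have hS : {r | ∃ x : Fin 0 → ℝ, eucNorm x = 1 ∧ r = eucNorm (M.mulVec x)} = ∅ := by
      ext r
      simp only [Set.mem_setOf_eq, Set.mem_empty_iff_false, iff_false]
      rintro ⟨x, hx, -⟩
      simp [eucNorm] at hx
    rw [spec, hS, Real.sSup_empty, hM, norm_zero]
  · have hbne : Nonempty (Fin b) := ⟨⟨0, hb⟩⟩
    set S := {r | ∃ x : Fin b → ℝ, eucNorm x = 1 ∧ r = eucNorm (M.mulVec x)} with hSdef
    have e0 : Fin b → ℝ := fun j => if j = ⟨0, hb⟩ then 1 else 0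
    have he0 : eucNorm (fun j => if j = ⟨0, hb⟩ then (1:ℝ) else 0) = 1 := by
      rw [eucNorm]
      rw [Finset.sum_eq_single ⟨0, hb⟩]
      · simp
      · intro j _ hj; simp [hj]
      · simp
    have hne : S.Nonempty := ⟨_, ⟨_, he0, rfl⟩⟩
    have hub : ∀ r ∈ S, r ≤ ‖M‖ := by
      rintro r ⟨x, hx, rfl⟩
      calc eucNorm (M *ᵥ x) ≤ ‖M‖ * eucNorm x := mulVec_enorm_le M x
        _ = ‖M‖ := by rw [hx, mul_one]
    have hbdd : BddAbove S := ⟨‖M‖, hub⟩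
    refine le_antisymm (csSup_le hne hub) ?_
    have hcs : 0 ≤ sSup S := by
      rcases hne with ⟨r, hr⟩
      have : 0 ≤ r := by rcases hr with ⟨x, -, rfl⟩; exact enorm_nonneg _
      exact this.trans (le_csSup hbdd hr)
    refine norm_le_of_mulVec M hcs fun x => ?_
    rcases eq_or_ne x 0 with rfl | hx0
    · rw [Matrix.mulVec_zero]
      simp [eucNorm]
    · have hxn : eucNorm x ≠ 0 := by
        intro h
        apply hx0
        have := enormE ((WithLp.equiv 2 (Fin b → ℝ)).symm x)
        simp only [Equiv.apply_symm_apply] at this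
        rw [this] at h
        have := norm_eq_zero.mp h
        simpa using congrArg (WithLp.equiv 2 (Fin b → ℝ)) this
      have hxp : 0 < eucNorm x := lt_of_le_of_ne (enorm_nonneg x) (Ne.symm hxn)
      set u : Fin b → ℝ := (eucNorm x)⁻¹ • x with hu
      have hun : eucNorm u = 1 := by
        rw [hu, eucNorm_smul, abs_of_pos (by positivity), inv_mul_cancel₀ hxn]
      have hMu : eucNorm (M *ᵥ u) ∈ S := ⟨u, hun, rfl⟩
      have hEq : eucNorm (M *ᵥ x) = eucNorm x * eucNorm (M *ᵥ u) := by
        rw [hu, Matrix.mulVec_smul, eucNorm_smul, abs_of_pos (by positivity)]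
        field_simp
      have hsS : spec M = sSup S := rfl
      rw [hEq, hsS, mul_comm (sSup S)]
      exact mul_le_mul_of_nonneg_left (le_csSup hbdd hMu) (le_of_lt hxp)

lemma norm_transpose {a b : ℕ} (M : Matrix (Fin a) (Fin b) ℝ) : ‖Mᵀ‖ = ‖M‖ := by
  rw [← Matrix.conjTranspose_eq_transpose_of_trivial]
  exact Matrix.l2_opNorm_conjTranspose M

lemma norm_le_one_of_orth {a b : ℕ} (M : Matrix (Fin a) (Fin b) ℝ) (h : Mᵀ * M = 1) :
    ‖M‖ ≤ 1 := by
  refine norm_le_of_mulVec M zero_le_one fun x => ?_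
  rw [one_mul]
  have key : (M *ᵥ x) ⬝ᵥ (M *ᵥ x) = x ⬝ᵥ x := by
    rw [Matrix.dotProduct_mulVec, ← Matrix.vecMul_transpose, Matrix.vecMul_vecMul, h,
      Matrix.vecMul_one]
  have hdp : ∀ {n : ℕ} (v : Fin n → ℝ), eucNorm v = Real.sqrt (v ⬝ᵥ v) := by
    intro n v
    rw [eucNorm, dotProduct]
    congr 1
    exact Finset.sum_congr rfl fun i _ => (sq (v i))
  rw [hdp, hdp, key]

lemma norm_diag_sandwich_le {a b c : ℕ} (X : Matrix (Fin a) (Fin b) ℝ) (d : Fin b → ℝ)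
    (Y : Matrix (Fin b) (Fin c) ℝ) (hX : ‖X‖ ≤ 1) (hY : ‖Y‖ ≤ 1) {r : ℝ} (hr : 0 ≤ r)
    (hd : ∀ i, |d i| ≤ r) : ‖X * Matrix.diagonal d * Y‖ ≤ r := by
  have hdn : ‖(Matrix.diagonal d : Matrix (Fin b) (Fin b) ℝ)‖ ≤ r := by
    refine norm_le_of_mulVec _ hr fun x => ?_
    rw [eucNorm, eucNorm]
    have h1 : ∀ i, ((Matrix.diagonal d *ᵥ x) i)^2 ≤ r^2 * (x i)^2 := by
      intro i
      rw [Matrix.mulVec_diagonal, mul_pow]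
      have : (d i)^2 ≤ r^2 := by
        have := hd i
        nlinarith [abs_nonneg (d i), sq_abs (d i)]
      nlinarith [sq_nonneg (x i)]
    calc Real.sqrt (∑ i, ((Matrix.diagonal d *ᵥ x) i)^2)
        ≤ Real.sqrt (∑ i, r^2 * (x i)^2) := by
          apply Real.sqrt_le_sqrt; exact Finset.sum_le_sum fun i _ => h1 i
      _ = r * Real.sqrt (∑ i, (x i)^2) := by
          rw [← Finset.mul_sum, Real.sqrt_mul (sq_nonneg r), Real.sqrt_sq hr]
  have hXn : 0 ≤ ‖X‖ := norm_nonneg _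
  calc ‖X * Matrix.diagonal d * Y‖ ≤ ‖X * Matrix.diagonal d‖ * ‖Y‖ := Matrix.l2_opNorm_mul _ _
    _ ≤ ‖X‖ * ‖Matrix.diagonal d‖ * ‖Y‖ := by
        apply mul_le_mul_of_nonneg_right (Matrix.l2_opNorm_mul _ _) (norm_nonneg _)
    _ ≤ 1 * r * 1 := by
        apply mul_le_mul _ hY (norm_nonneg _) (by positivity)
        exact mul_le_mul hX hdn (norm_nonneg _) zero_le_one
    _ = r := by ring

lemma mp_left_inv {a b : ℕ} (A : Matrix (Fin a) (Fin b) ℝ) (G : Matrix (Fin b) (Fin a) ℝ)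
    (h : A * G * A = A) (hrank : A.rank = b) : G * A = 1 := by
  have hfin : Module.finrank ℝ ↥(LinearMap.range A.mulVecLin) = b := hrank
  have hrn := LinearMap.finrank_range_add_finrank_ker A.mulVecLin
  rw [hfin, Module.finrank_fin_fun ℝ] at hrn
  have hker0 : Module.finrank ℝ ↥(LinearMap.ker A.mulVecLin) = 0 := by omega
  have hker : LinearMap.ker A.mulVecLin = ⊥ := Submodule.finrank_eq_zero.mp hker0
  have hinj : Function.Injective A.mulVecLin := LinearMap.ker_eq_bot.mp hker
  have key : ∀ v : Fin b → ℝ, (G * A) *ᵥ v = v := by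
    intro v
    have hv : A *ᵥ ((G * A) *ᵥ v) = A *ᵥ v := by
      rw [Matrix.mulVec_mulVec, ← Matrix.mul_assoc, h]
    have := hinj (a₁ := (G * A) *ᵥ v) (a₂ := v) (by simpa [Matrix.mulVecLin_apply] using hv)
    exact this
  ext i j
  have h2 := congrFun (key (Pi.single j 1)) i
  simp only [Matrix.mulVec_single, mul_one] at h2
  simpa [Matrix.one_apply, Pi.single_apply] using h2

/-- Lemma 3.5: `(C + ΔC)(U + ΔU)_ε† U = C + E_*` with
`‖E_*‖₂ ≤ ‖(Π_{I_*}ᵀ Q_C)†‖₂ (ε + 2‖ΔU‖₂ + ‖ΔU‖₂²/ε) + ‖ΔC‖₂ (1 + ‖ΔU‖₂/ε)`,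
where `U = Π_{I_*}ᵀ C` has full column rank and `C = Q_C R_C` is a thin QR factorization. -/
theorem perturbed_trunc_pinv_projection {m k p : ℕ} (ε : ℝ) (hε : 0 < ε)
    (C QC : Matrix (Fin m) (Fin k) ℝ) (RC : Matrix (Fin k) (Fin k) ℝ)
    (hQR : C = QC * RC) (hQC : QCᵀ * QC = 1)
    (f : Fin (k + p) → Fin m) (hf : Function.Injective f)
    (hUrank : ((sel f)ᵀ * C).rank = k)
    (hQCrank : ((sel f)ᵀ * QC).rank = k)
    (G : Matrix (Fin k) (Fin (k + p)) ℝ) (hG : IsMP ((sel f)ᵀ * QC) G)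
    (ΔC : Matrix (Fin m) (Fin k) ℝ) (ΔU : Matrix (Fin (k + p)) (Fin k) ℝ)
    -- thin SVD data of U + ΔU
    (W : Matrix (Fin (k + p)) (Fin k) ℝ) (V : Matrix (Fin k) (Fin k) ℝ) (σ : Fin k → ℝ)
    (hW : Wᵀ * W = 1) (hV : Vᵀ * V = 1) (hV' : V * Vᵀ = 1) (hσ : ∀ i, 0 ≤ σ i)
    (hUΔU : (sel f)ᵀ * C + ΔU = W * Matrix.diagonal σ * Vᵀ) :
    ∃ E : Matrix (Fin m) (Fin k) ℝ,
      (C + ΔC) * (V * Matrix.diagonal (fun i => if ε ≤ σ i then (σ i)⁻¹ else 0) * Wᵀ)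
          * ((sel f)ᵀ * C) = C + E ∧
      spec E ≤ spec G * (ε + 2 * spec ΔU + spec ΔU ^ 2 / ε)
          + spec ΔC * (1 + spec ΔU / ε) := by
  classical
  set U : Matrix (Fin (k + p)) (Fin k) ℝ := (sel f)ᵀ * C with hUdef
  set P : Matrix (Fin k) (Fin (k + p)) ℝ :=
    V * Matrix.diagonal (fun i => if ε ≤ σ i then (σ i)⁻¹ else 0) * Wᵀ with hPdef
  set g : Fin k → ℝ := fun i => if ε ≤ σ i then (σ i)⁻¹ else 0 with hg
  set B : Matrix (Fin (k + p)) (Fin k) ℝ := W * Matrix.diagonal σ * Vᵀ with hBdef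
  have hUB : U = B - ΔU := eq_sub_of_add_eq hUΔU
  set A : Matrix (Fin (k + p)) (Fin k) ℝ := (sel f)ᵀ * QC with hA
  have hGA : G * A = 1 := mp_left_inv A G hG.1 hQCrank
  have hC' : C = QC * G * U := by
    have hUA : U = A * RC := by rw [hUdef, hA, hQR, Matrix.mul_assoc]
    rw [hUA, Matrix.mul_assoc, ← Matrix.mul_assoc G, hGA, Matrix.one_mul, hQR]
  refine ⟨(C * P * U - C) + ΔC * (P * U), ?_, ?_⟩
  · rw [Matrix.add_mul, Matrix.add_mul, Matrix.mul_assoc ΔC]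
    abel
  · simp only [spec_eq_norm]
    have hWn : ‖W‖ ≤ 1 := norm_le_one_of_orth W hW
    have hVn : ‖V‖ ≤ 1 := norm_le_one_of_orth V hV
    have hWtn : ‖Wᵀ‖ ≤ 1 := by rw [norm_transpose]; exact hWn
    have hVtn : ‖Vᵀ‖ ≤ 1 := by rw [norm_transpose]; exact hVn
    have hQCn : ‖QC‖ ≤ 1 := norm_le_one_of_orth QC hQC
    -- algebraic identities for B, P
    have hPB : P * B = V * Matrix.diagonal (fun i => g i * σ i) * Vᵀ := by
      rw [hPdef, hBdef]
      simp only [Matrix.mul_assoc]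
      rw [← Matrix.mul_assoc Wᵀ W, hW, Matrix.one_mul,
        ← Matrix.mul_assoc (Matrix.diagonal g), Matrix.diagonal_mul_diagonal]
    have hBP : B * P = W * Matrix.diagonal (fun i => σ i * g i) * Wᵀ := by
      rw [hPdef, hBdef]
      simp only [Matrix.mul_assoc]
      rw [← Matrix.mul_assoc Vᵀ V, hV, Matrix.one_mul,
        ← Matrix.mul_assoc (Matrix.diagonal σ), Matrix.diagonal_mul_diagonal]
    have hBPB : B * P * B = W * Matrix.diagonal (fun i => σ i * g i * σ i) * Vᵀ := by
      rw [hBP, hBdef]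
      simp only [Matrix.mul_assoc]
      rw [← Matrix.mul_assoc Wᵀ W, hW, Matrix.one_mul,
        ← Matrix.mul_assoc (Matrix.diagonal fun i => σ i * g i), Matrix.diagonal_mul_diagonal]
    have hgσ : ∀ i, σ i * g i = if ε ≤ σ i then 1 else 0 := by
      intro i
      rw [hg]
      by_cases hi : ε ≤ σ i
      · have : σ i ≠ 0 := by nlinarith
        simp [hi, this]
      · simp [hi]
    have hσg : ∀ i, g i * σ i = if ε ≤ σ i then 1 else 0 := by
      intro i; rw [mul_comm]; exact hgσ i
    -- norm bounds
    have h1 : ‖B * P * B - B‖ ≤ ε := by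
      have hid : B * P * B - B = W * Matrix.diagonal (fun i => σ i * g i * σ i - σ i) * Vᵀ := by
        rw [hBPB, hBdef, ← Matrix.sub_mul, ← Matrix.mul_sub, Matrix.diagonal_sub]
      rw [hid]
      refine norm_diag_sandwich_le W _ Vᵀ hWn hVtn hε.le fun i => ?_
      rw [hgσ i]
      by_cases hi : ε ≤ σ i
      · simp only [if_pos hi, one_mul, sub_self, abs_zero]
        exact hε.le
      · push_neg at hi
        rw [if_neg (not_le.mpr hi), zero_mul, zero_sub, abs_neg, abs_of_nonneg (hσ i)]
        exact hi.le
    have hBPn : ‖B * P‖ ≤ 1 := by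
      rw [hBP]
      refine norm_diag_sandwich_le W _ Wᵀ hWn hWtn zero_le_one fun i => ?_
      rw [hgσ i]
      by_cases hi : ε ≤ σ i <;> simp [hi]
    have hPBn : ‖P * B‖ ≤ 1 := by
      rw [hPB]
      refine norm_diag_sandwich_le V _ Vᵀ hVn hVtn zero_le_one fun i => ?_
      rw [hσg i]
      by_cases hi : ε ≤ σ i <;> simp [hi]
    have h1PB : ‖(1 : Matrix (Fin k) (Fin k) ℝ) - P * B‖ ≤ 1 := by
      have hid : (1 : Matrix (Fin k) (Fin k) ℝ) - P * B
          = V * Matrix.diagonal (fun i => 1 - g i * σ i) * Vᵀ := by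
        rw [hPB]
        nth_rewrite 1 [show (1 : Matrix (Fin k) (Fin k) ℝ)
          = V * Matrix.diagonal (fun _ => (1:ℝ)) * Vᵀ from by
            rw [Matrix.diagonal_one, Matrix.mul_one, hV']]
        rw [← Matrix.sub_mul, ← Matrix.mul_sub, Matrix.diagonal_sub]
      rw [hid]
      refine norm_diag_sandwich_le V _ Vᵀ hVn hVtn zero_le_one fun i => ?_
      rw [hσg i]
      by_cases hi : ε ≤ σ i <;> simp [hi]
    have hPn : ‖P‖ ≤ ε⁻¹ := by
      rw [hPdef]
      refine norm_diag_sandwich_le V _ Wᵀ hVn hWtn (by positivity) fun i => ?_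
      show |if ε ≤ σ i then (σ i)⁻¹ else 0| ≤ ε⁻¹
      by_cases hi : ε ≤ σ i
      · rw [if_pos hi, abs_of_nonneg (inv_nonneg.mpr (hσ i))]
        exact inv_anti₀ hε hi
      · rw [if_neg hi, abs_zero]
        positivity
    -- decomposition of U*P*U - U
    have hE1 : U * P * U - U
        = (B * P * B - B) - B * P * ΔU + ΔU * (1 - P * B) + ΔU * P * ΔU := by
      rw [hUB]
      simp only [Matrix.sub_mul, Matrix.mul_sub, Matrix.mul_one, ← Matrix.mul_assoc]
      abel
    have hΔU0 : (0:ℝ) ≤ ‖ΔU‖ := norm_nonneg _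
    have hBPΔU : ‖B * P * ΔU‖ ≤ ‖ΔU‖ := by
      calc ‖B * P * ΔU‖ ≤ ‖B * P‖ * ‖ΔU‖ := Matrix.l2_opNorm_mul _ _
        _ ≤ 1 * ‖ΔU‖ := mul_le_mul_of_nonneg_right hBPn hΔU0
        _ = ‖ΔU‖ := one_mul _
    have hΔU1PB : ‖ΔU * (1 - P * B)‖ ≤ ‖ΔU‖ := by
      calc ‖ΔU * (1 - P * B)‖ ≤ ‖ΔU‖ * ‖(1 : Matrix (Fin k) (Fin k) ℝ) - P * B‖ :=
            Matrix.l2_opNorm_mul _ _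
        _ ≤ ‖ΔU‖ * 1 := mul_le_mul_of_nonneg_left h1PB hΔU0
        _ = ‖ΔU‖ := mul_one _
    have hΔUPΔU : ‖ΔU * P * ΔU‖ ≤ ε⁻¹ * ‖ΔU‖ ^ 2 := by
      calc ‖ΔU * P * ΔU‖ ≤ ‖ΔU * P‖ * ‖ΔU‖ := Matrix.l2_opNorm_mul _ _
        _ ≤ ‖ΔU‖ * ‖P‖ * ‖ΔU‖ :=
            mul_le_mul_of_nonneg_right (Matrix.l2_opNorm_mul _ _) hΔU0
        _ ≤ ‖ΔU‖ * ε⁻¹ * ‖ΔU‖ := by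
            have := mul_le_mul_of_nonneg_left hPn hΔU0
            exact mul_le_mul_of_nonneg_right this hΔU0
        _ = ε⁻¹ * ‖ΔU‖ ^ 2 := by ring
    have hE1n : ‖U * P * U - U‖ ≤ ε + 2 * ‖ΔU‖ + ε⁻¹ * ‖ΔU‖ ^ 2 := by
      rw [hE1]
      calc ‖(B * P * B - B) - B * P * ΔU + ΔU * (1 - P * B) + ΔU * P * ΔU‖
          ≤ ‖(B * P * B - B) - B * P * ΔU + ΔU * (1 - P * B)‖ + ‖ΔU * P * ΔU‖ :=
            norm_add_le _ _
        _ ≤ ‖(B * P * B - B) - B * P * ΔU‖ + ‖ΔU * (1 - P * B)‖ + ‖ΔU * P * ΔU‖ := by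
            gcongr; exact norm_add_le _ _
        _ ≤ (‖B * P * B - B‖ + ‖B * P * ΔU‖) + ‖ΔU * (1 - P * B)‖ + ‖ΔU * P * ΔU‖ := by
            gcongr; exact norm_sub_le _ _
        _ ≤ (ε + ‖ΔU‖) + ‖ΔU‖ + ε⁻¹ * ‖ΔU‖ ^ 2 :=
            add_le_add (add_le_add (add_le_add h1 hBPΔU) hΔU1PB) hΔUPΔU
        _ = ε + 2 * ‖ΔU‖ + ε⁻¹ * ‖ΔU‖ ^ 2 := by ring
    have hPUn : ‖P * U‖ ≤ 1 + ε⁻¹ * ‖ΔU‖ := by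
      have hid : P * U = P * B - P * ΔU := by rw [hUB, Matrix.mul_sub]
      rw [hid]
      calc ‖P * B - P * ΔU‖ ≤ ‖P * B‖ + ‖P * ΔU‖ := norm_sub_le _ _
        _ ≤ 1 + ε⁻¹ * ‖ΔU‖ :=
            add_le_add hPBn ((Matrix.l2_opNorm_mul _ _).trans
              (mul_le_mul_of_nonneg_right hPn hΔU0))
    have hCPU : C * P * U - C = (QC * G) * (U * P * U - U) := by
      rw [hC', Matrix.mul_sub]
      simp only [Matrix.mul_assoc]
    have hQCG : ‖QC * G‖ ≤ ‖G‖ := by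
      calc ‖QC * G‖ ≤ ‖QC‖ * ‖G‖ := Matrix.l2_opNorm_mul _ _
        _ ≤ 1 * ‖G‖ := mul_le_mul_of_nonneg_right hQCn (norm_nonneg _)
        _ = ‖G‖ := one_mul _
    have hG0 : (0:ℝ) ≤ ‖G‖ := norm_nonneg _
    have hΔC0 : (0:ℝ) ≤ ‖ΔC‖ := norm_nonneg _
    have hE1nn : (0:ℝ) ≤ ε + 2 * ‖ΔU‖ + ε⁻¹ * ‖ΔU‖ ^ 2 := by positivity
    calc ‖C * P * U - C + ΔC * (P * U)‖
        ≤ ‖C * P * U - C‖ + ‖ΔC * (P * U)‖ := norm_add_le _ _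
      _ ≤ ‖QC * G‖ * ‖U * P * U - U‖ + ‖ΔC‖ * ‖P * U‖ := by
          rw [hCPU]
          exact add_le_add (Matrix.l2_opNorm_mul _ _) (Matrix.l2_opNorm_mul _ _)
      _ ≤ ‖G‖ * (ε + 2 * ‖ΔU‖ + ε⁻¹ * ‖ΔU‖ ^ 2) + ‖ΔC‖ * (1 + ε⁻¹ * ‖ΔU‖) := by
          exact add_le_add (mul_le_mul hQCG hE1n (norm_nonneg _) hG0)
            (mul_le_mul_of_nonneg_left hPUn hΔC0)
      _ = ‖G‖ * (ε + 2 * ‖ΔU‖ + ‖ΔU‖ ^ 2 / ε) + ‖ΔC‖ * (1 + ‖ΔU‖ / ε) := by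
          rw [div_eq_inv_mul, div_eq_inv_mul]
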